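/- SISO pole assignment with uniqueness (Proposition 2.29). Let A ∈ ℝ^{n×n} and b ∈ ℝ^{n×1} be such that the pair (A, b) is controllable, i.e. the n×n matrix [b, Ab, …, A^{n−1}b] has rank n. Then for every monic polynomial Δ̄ ∈ ℝ[s] of degree n there exists exactly one row vector K ∈ ℝ^{1×n} such that the characteristic polynomial of A + bK equals Δ̄. -/

import Mathlib

noncomputable section
open Matrix Polynomial

/-- The controllability matrix `[b, Ab, …, A^(n-1) b]` of a single-input pair
`(A, b)`, as an `n × n` matrix indexed by `Fin n × Fin 1`. -/
def ctrbMat (n : ℕ) (A : Matrix (Fin n) (Fin n) ℝ) (b : Matrix (Fin n) (Fin 1) ℝ) :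
    Matrix (Fin n) (Fin n × Fin 1) ℝ :=
  Matrix.of fun i kj => (A ^ (kj.1 : ℕ) * b) i kj.2

open Finset


lemma det_lemma_field {F : Type*} [Field F] {m : Type*} [Fintype m] [DecidableEq m]
    (M : Matrix m m F) (hM : M.det ≠ 0) (u v : m → F) :
    (M + replicateCol (Fin 1) u * replicateRow (Fin 1) v).det = M.det + v ⬝ᵥ (M.adjugate *ᵥ u) := by
  rw [Matrix.det_add_mul (replicateCol (Fin 1) u) (replicateRow (Fin 1) v) (isUnit_iff_ne_zero.2 hM),
    det_fin_one]
  have h1 : M⁻¹ * replicateCol (Fin 1) u = replicateCol (Fin 1) (M⁻¹ *ᵥ u) := (replicateCol_mulVec _ _).symm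
  rw [Matrix.mul_assoc, h1]
  simp only [Pi.add_apply, Matrix.add_apply, Matrix.one_apply_eq, replicateRow_mul_replicateCol_apply]
  rw [Matrix.inv_def, Ring.inverse_eq_inv, smul_mulVec, dotProduct_smul]
  rw [smul_eq_mul, mul_add, mul_one, ← mul_assoc, mul_inv_cancel₀ hM, one_mul]

lemma det_map' {m : Type*} [Fintype m] [DecidableEq m] {R S : Type*} [CommRing R] [CommRing S]
    (f : R →+* S) (N : Matrix m m R) : (N.map f).det = f N.det := by
  rw [RingHom.map_det, RingHom.mapMatrix_apply]

lemma det_lemma_poly {m : Type*} [Fintype m] [DecidableEq m]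
    (M : Matrix m m (Polynomial ℝ)) (hM : M.det ≠ 0) (u v : m → Polynomial ℝ) :
    (M + replicateCol (Fin 1) u * replicateRow (Fin 1) v).det = M.det + v ⬝ᵥ (M.adjugate *ᵥ u) := by
  set F := FractionRing (Polynomial ℝ)
  set f : Polynomial ℝ →+* F := algebraMap (Polynomial ℝ) F with hfdef
  have hf : Function.Injective f := IsFractionRing.injective _ _
  apply hf
  have hmap : ((M + replicateCol (Fin 1) u * replicateRow (Fin 1) v).map f)
      = ((M.map f) + replicateCol (Fin 1) (f ∘ u) * replicateRow (Fin 1) (f ∘ v)) := by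
    ext i j
    simp [Matrix.map, mul_apply, Matrix.replicateCol, Matrix.replicateRow]
  have hd : (M.map f).det ≠ 0 := by
    rw [det_map' f M]
    simpa using fun h => hM (hf (by simpa using h))
  have hadj : (M.map f).adjugate = M.adjugate.map f := by
    rw [← RingHom.mapMatrix_apply, ← RingHom.mapMatrix_apply, RingHom.map_adjugate]
  calc f ((M + replicateCol (Fin 1) u * replicateRow (Fin 1) v).det)
      = ((M + replicateCol (Fin 1) u * replicateRow (Fin 1) v).map f).det := (det_map' f _).symm
    _ = ((M.map f) + replicateCol (Fin 1) (f ∘ u) * replicateRow (Fin 1) (f ∘ v)).det := by rw [hmap]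
    _ = (M.map f).det + (f ∘ v) ⬝ᵥ ((M.map f).adjugate *ᵥ (f ∘ u)) :=
        det_lemma_field _ hd _ _
    _ = f (M.det + v ⬝ᵥ (M.adjugate *ᵥ u)) := by
        rw [hadj, det_map' f M, map_add]
        congr 1
        rw [RingHom.map_dotProduct]
        congr 1
        ext i
        exact (RingHom.map_mulVec f _ _ i).symm

section aux
variable {n : ℕ} (A : Matrix (Fin n) (Fin n) ℝ) (b : Matrix (Fin n) (Fin 1) ℝ)

/-- coefficients of charpoly -/
def cp (k : ℕ) : ℝ := A.charpoly.coeff k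

/-- Faddeev–LeVerrier coefficient matrices of the adjugate of the charmatrix. -/
def NN (k : ℕ) : Matrix (Fin n) (Fin n) ℝ :=
  ∑ m ∈ range (n - k), cp A (k + 1 + m) • A ^ m

lemma charpoly_natDegree : A.charpoly.natDegree = n := by
  simpa using Matrix.charpoly_natDegree_eq_dim A

lemma cp_top : cp A n = 1 := by
  have h2 := (Matrix.charpoly_monic A).coeff_natDegree
  unfold cp
  rwa [charpoly_natDegree A] at h2

lemma cp_zero {k : ℕ} (hk : n < k) : cp A k = 0 := by
  apply Polynomial.coeff_eq_zero_of_natDegree_lt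
  rw [charpoly_natDegree A]; exact hk

lemma NN_rec (k : ℕ) : NN A (k + 1) * A + cp A (k + 1) • 1 = NN A k := by
  unfold NN
  by_cases hk : k < n
  · have h : n - k = (n - (k + 1)) + 1 := by omega
    rw [h, Finset.sum_range_succ', Finset.sum_mul]
    congr 1
    apply Finset.sum_congr rfl
    intro m _
    rw [smul_mul_assoc, ← pow_succ, show k + 1 + 1 + m = k + 1 + (m + 1) from by omega]
  · have h1 : n - k = 0 := by omega
    have h2 : n - (k + 1) = 0 := by omega
    rw [h1, h2, cp_zero A (by omega)]
    simp

lemma NN_zero_rec : NN A 0 * A + cp A 0 • 1 = 0 := by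
  have hCH := Matrix.aeval_self_charpoly A
  rw [aeval_eq_sum_range, charpoly_natDegree A, Finset.sum_range_succ'] at hCH
  unfold NN cp
  rw [Finset.sum_mul, Nat.sub_zero]
  calc (∑ m ∈ range n, (cp A (0 + 1 + m) • A ^ m) * A) + cp A 0 • 1
      = (∑ m ∈ range n, A.charpoly.coeff (m + 1) • A ^ (m + 1)) + A.charpoly.coeff 0 • A ^ 0 := by
        rw [pow_zero]
        congr 1
        apply Finset.sum_congr rfl
        intro m _
        rw [smul_mul_assoc, ← pow_succ, show 0 + 1 + m = m + 1 from by omega]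
        rfl
    _ = 0 := hCH

lemma NN_top (hn : 0 < n) : NN A (n - 1) = 1 := by
  unfold NN
  rw [show n - (n - 1) = 1 from by omega, Finset.sum_range_one,
    show n - 1 + 1 + 0 = n from by omega, cp_top A, pow_zero, one_smul]

/-- Candidate adjugate of the charmatrix. -/
def QQ : Matrix (Fin n) (Fin n) (Polynomial ℝ) :=
  ∑ k ∈ range n, (X : Polynomial ℝ) ^ k • (NN A k).map C

/-- predecessor-shifted NN -/
def Np : ℕ → Matrix (Fin n) (Fin n) ℝ
  | 0 => 0
  | (j + 1) => NN A j

lemma NA (k : ℕ) : NN A k * A = Np A k - cp A k • 1 := by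
  cases k with
  | zero =>
      rw [show Np A 0 = (0 : Matrix (Fin n) (Fin n) ℝ) from rfl, eq_sub_iff_add_eq]
      exact NN_zero_rec A
  | succ j =>
      rw [show Np A (j + 1) = NN A j from rfl, eq_sub_iff_add_eq]
      exact NN_rec A j

lemma charmatrix_eq : charmatrix A = (X : Polynomial ℝ) • (1 : Matrix (Fin n) (Fin n) (Polynomial ℝ)) - A.map C := by
  ext i j
  by_cases h : i = j
  · subst h; simp [charmatrix_apply_eq, Matrix.one_apply, Matrix.map_apply]
  · simp [charmatrix_apply_ne _ _ _ h, Matrix.one_apply_ne h, Matrix.map_apply]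

lemma smul_one_map (r : ℝ) :
    ((r • (1 : Matrix (Fin n) (Fin n) ℝ)).map C) = C r • (1 : Matrix (Fin n) (Fin n) (Polynomial ℝ)) := by
  ext i j
  by_cases h : i = j <;> simp [Matrix.map_apply, Matrix.one_apply, h]

lemma QQ_mul (hn : 0 < n) :
    QQ A * charmatrix A = A.charpoly • (1 : Matrix (Fin n) (Fin n) (Polynomial ℝ)) := by
  have step1 : QQ A * charmatrix A
      = (X : Polynomial ℝ) • QQ A - ∑ k ∈ range n, (X : Polynomial ℝ) ^ k • (NN A k * A).map C := by
    rw [charmatrix_eq A, Matrix.mul_sub, Matrix.mul_smul, mul_one]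
    congr 1
    unfold QQ
    rw [Finset.sum_mul]
    apply Finset.sum_congr rfl
    intro k _
    rw [smul_mul_assoc, Matrix.map_mul]
  rw [step1]
  have step2 : ∑ k ∈ range n, (X : Polynomial ℝ) ^ k • (NN A k * A).map C
      = ∑ k ∈ range n, (X : Polynomial ℝ) ^ k • (Np A k).map C
        - ∑ k ∈ range n, (X : Polynomial ℝ) ^ k • (C (cp A k) • (1 : Matrix (Fin n) (Fin n) (Polynomial ℝ))) := by
    rw [← Finset.sum_sub_distrib]
    apply Finset.sum_congr rfl
    intro k _
    rw [NA]
    have hms : ((Np A k - cp A k • 1).map C : Matrix (Fin n) (Fin n) (Polynomial ℝ))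
        = (Np A k).map C - (cp A k • (1 : Matrix (Fin n) (Fin n) ℝ)).map C := by
      ext i j
      simp [Matrix.map_apply, Matrix.sub_apply]
    rw [hms, smul_one_map, smul_sub]
  rw [step2]
  have step3 : (X : Polynomial ℝ) • QQ A
      = ∑ k ∈ range n, (X : Polynomial ℝ) ^ k • (Np A k).map C
        + (X : Polynomial ℝ) ^ n • (Np A n).map C := by
    unfold QQ
    rw [Finset.smul_sum, ← Finset.sum_range_succ]
    rw [Finset.sum_range_succ']
    simp only [Np, pow_zero, one_smul, Matrix.map_zero C C.map_zero, add_zero]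
    apply Finset.sum_congr rfl
    intro k _
    rw [smul_smul, ← pow_succ']
  rw [step3]
  have hNp : Np A n = 1 := by
    cases n with
    | zero => omega
    | succ m => show NN A m = 1; simpa using NN_top A (by omega)
  rw [hNp, Matrix.map_one (⇑C) C.map_zero C.map_one]
  have hchar : A.charpoly • (1 : Matrix (Fin n) (Fin n) (Polynomial ℝ))
      = (X : Polynomial ℝ) ^ n • (1 : Matrix (Fin n) (Fin n) (Polynomial ℝ))
        + ∑ k ∈ range n, (X : Polynomial ℝ) ^ k • (C (cp A k) • (1 : Matrix (Fin n) (Fin n) (Polynomial ℝ))) := by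
    have hrep : A.charpoly = ∑ k ∈ range (n + 1), C (A.charpoly.coeff k) * X ^ k := by
      have := Polynomial.as_sum_range' A.charpoly (n + 1) (by rw [charpoly_natDegree A]; omega)
      simpa [Polynomial.C_mul_X_pow_eq_monomial] using this
    rw [hrep, Finset.sum_smul, Finset.sum_range_succ]
    rw [show A.charpoly.coeff n = 1 from cp_top A, Polynomial.C_1, one_mul, add_comm]
    congr 1
    apply Finset.sum_congr rfl
    intro k _
    rw [smul_smul, mul_comm]
    rfl
  rw [hchar]
  abel

lemma QQ_adj (hn : 0 < n) : QQ A = (charmatrix A).adjugate := by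
  have h1 : QQ A * charmatrix A = A.charpoly • 1 := QQ_mul A hn
  have h2 : (charmatrix A).adjugate * charmatrix A = A.charpoly • 1 := Matrix.adjugate_mul _
  have h3 : (QQ A - (charmatrix A).adjugate) * charmatrix A = 0 := by
    rw [Matrix.sub_mul, h1, h2, sub_self]
  have h4 : A.charpoly • (QQ A - (charmatrix A).adjugate) = 0 := by
    have := congrArg (fun M => M * (charmatrix A).adjugate) h3
    simp only [Matrix.zero_mul] at this
    rw [Matrix.mul_assoc, Matrix.mul_adjugate, Matrix.mul_smul, mul_one] at this
    convert this using 2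
    rfl
  have hc : A.charpoly ≠ 0 := (Matrix.charpoly_monic A).ne_zero
  suffices h5 : QQ A - (charmatrix A).adjugate = 0 by
    rw [sub_eq_zero] at h5; exact h5
  apply Matrix.ext
  intro i j
  have := congrFun (congrFun h4 i) j
  simp only [Matrix.smul_apply, Matrix.sub_apply, Matrix.zero_apply, smul_eq_mul] at this
  simp only [Matrix.sub_apply, Matrix.zero_apply]
  exact (mul_eq_zero.mp this).resolve_left hc

end aux

section main
variable {n : ℕ} (A : Matrix (Fin n) (Fin n) ℝ) (b : Matrix (Fin n) (Fin 1) ℝ)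

lemma charmatrix_add_rankone (K : Matrix (Fin 1) (Fin n) ℝ) :
    charmatrix (A + b * K)
      = charmatrix A + replicateCol (Fin 1) (fun i => C (b i 0)) * replicateRow (Fin 1) (fun j => -C (K 0 j)) := by
  apply Matrix.ext
  intro i j
  have hbk : (b * K) i j = b i 0 * K 0 j := by
    rw [Matrix.mul_apply, Fin.sum_univ_one]
  by_cases h : i = j
  · subst h
    simp only [charmatrix_apply_eq, Matrix.add_apply, Matrix.mul_apply, Fin.sum_univ_one,
      Matrix.replicateCol_apply, Matrix.replicateRow_apply, hbk, map_add, _root_.map_mul]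
    ring
  · simp only [charmatrix_apply_ne _ _ _ h, Matrix.add_apply, Matrix.mul_apply, Fin.sum_univ_one,
      Matrix.replicateCol_apply, Matrix.replicateRow_apply, hbk, map_add, _root_.map_mul]
    ring

lemma charpoly_update (K : Matrix (Fin 1) (Fin n) ℝ) :
    (A + b * K).charpoly
      = A.charpoly - ∑ j, C (K 0 j) * ((charmatrix A).adjugate *ᵥ fun i => C (b i 0)) j := by
  have hM : (charmatrix A).det ≠ 0 := (Matrix.charpoly_monic A).ne_zero
  rw [Matrix.charpoly, charmatrix_add_rankone A b K, det_lemma_poly _ hM]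
  rw [sub_eq_add_neg]
  congr 1
  rw [dotProduct, ← Finset.sum_neg_distrib]
  apply Finset.sum_congr rfl
  intro j _
  ring

/-- The coefficient matrix `T`: row `k` column `j` is `(N_k b)_j`. -/
def TT : Matrix (Fin n) (Fin n) ℝ := Matrix.of fun k j => (NN A (k : ℕ) * b) j 0

lemma adj_mulVec (hn : 0 < n) (j : Fin n) :
    ((charmatrix A).adjugate *ᵥ fun i => C (b i 0)) j
      = ∑ k : Fin n, C (TT A b k j) * X ^ (k : ℕ) := by
  rw [← QQ_adj A hn]
  have h1 : ((QQ A) *ᵥ fun i => C (b i 0)) j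
      = ∑ i, (∑ k ∈ range n, (X : Polynomial ℝ) ^ k * C (NN A k j i)) * C (b i 0) := by
    rw [Matrix.mulVec, dotProduct]
    apply Finset.sum_congr rfl
    intro i _
    congr 1
    unfold QQ
    rw [Matrix.sum_apply]
    apply Finset.sum_congr rfl
    intro k _
    rw [Matrix.smul_apply, Matrix.map_apply, smul_eq_mul]
  rw [h1]
  have h2 : ∀ i : Fin n, (∑ k ∈ range n, (X : Polynomial ℝ) ^ k * C (NN A k j i)) * C (b i 0)
      = ∑ k ∈ range n, (X : Polynomial ℝ) ^ k * (C (NN A k j i) * C (b i 0)) := by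
    intro i
    rw [Finset.sum_mul]
    apply Finset.sum_congr rfl
    intro k _
    ring
  simp only [h2]
  rw [Finset.sum_comm]
  have h3 : ∀ k ∈ range n,
      (∑ i, (X : Polynomial ℝ) ^ k * (C (NN A k j i) * C (b i 0)))
        = C ((NN A k * b) j 0) * X ^ k := by
    intro k _
    rw [← Finset.mul_sum, mul_comm]
    congr 1
    rw [Matrix.mul_apply, map_sum]
    exact Finset.sum_congr rfl fun i _ => (map_mul C _ _).symm
  rw [Finset.sum_congr rfl h3,
    ← Fin.sum_univ_eq_sum_range (fun k => C ((NN A k * b) j 0) * X ^ k) n]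
  rfl

/-- Controllability matrix with square index types. -/
def Cm : Matrix (Fin n) (Fin n) ℝ := Matrix.of fun j l => (A ^ (l : ℕ) * b) j 0

/-- The anti-triangular coefficient matrix. -/
def UU : Matrix (Fin n) (Fin n) ℝ :=
  Matrix.of fun k l => if (k : ℕ) + 1 + (l : ℕ) ≤ n then cp A ((k : ℕ) + 1 + (l : ℕ)) else 0

lemma TT_factor : TT A b = UU A * (Cm A b)ᵀ := by
  apply Matrix.ext
  intro k j
  have hk : (k : ℕ) < n := k.isLt
  have lhs : TT A b k j
      = ∑ m ∈ range (n - (k : ℕ)), cp A ((k : ℕ) + 1 + m) * (A ^ m * b) j 0 := by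
    show (NN A (k : ℕ) * b) j 0 = _
    unfold NN
    rw [Matrix.sum_mul, Matrix.sum_apply]
    apply Finset.sum_congr rfl
    intro m _
    rw [Matrix.smul_mul, Matrix.smul_apply, smul_eq_mul]
  have rhs : (UU A * (Cm A b)ᵀ) k j
      = ∑ l ∈ range n,
          (if (k : ℕ) + 1 + l ≤ n then cp A ((k : ℕ) + 1 + l) else 0) * (A ^ l * b) j 0 := by
    rw [Matrix.mul_apply,
      ← Fin.sum_univ_eq_sum_range
        (fun l => (if (k : ℕ) + 1 + l ≤ n then cp A ((k : ℕ) + 1 + l) else 0) * (A ^ l * b) j 0) n]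
    rfl
  rw [lhs, rhs]
  have hcong : ∑ m ∈ range (n - (k : ℕ)), cp A ((k : ℕ) + 1 + m) * (A ^ m * b) j 0
      = ∑ m ∈ range (n - (k : ℕ)),
          (if (k : ℕ) + 1 + m ≤ n then cp A ((k : ℕ) + 1 + m) else 0) * (A ^ m * b) j 0 := by
    apply Finset.sum_congr rfl
    intro m hm
    rw [if_pos (by have := Finset.mem_range.mp hm; omega)]
  rw [hcong]
  apply Finset.sum_subset (Finset.range_subset_range.mpr (by omega))
  intro x hx hnx
  have h1 := Finset.mem_range.mp hx
  have h2 : ¬ x < n - (k : ℕ) := fun h => hnx (Finset.mem_range.mpr h)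
  rw [if_neg (by omega), zero_mul]

lemma isUnit_det_of_rank_eq (M : Matrix (Fin n) (Fin n) ℝ) (h : M.rank = n) : IsUnit M.det := by
  have hsurj : Function.Surjective M.mulVecLin := by
    rw [← LinearMap.range_eq_top]
    apply Submodule.eq_top_of_finrank_eq
    rw [show Module.finrank ℝ (LinearMap.range M.mulVecLin) = M.rank from rfl, h]
    simp
  choose g hg using fun j => hsurj (Pi.single j 1)
  have hMB : M * (Matrix.of fun i j => g j i) = 1 := by
    apply Matrix.ext
    intro i j
    have h1 := congrFun (hg j) i
    have h2 : (M *ᵥ g j) i = ∑ l, M i l * g j l := rfl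
    rw [Matrix.mul_apply]
    show ∑ l, M i l * g j l = (1 : Matrix (Fin n) (Fin n) ℝ) i j
    rw [← h2]
    show M.mulVecLin (g j) i = _
    rw [h1, Matrix.one_apply, Pi.single_apply]
  exact Matrix.isUnit_det_of_right_inverse hMB

lemma Cm_det (hctrb : (ctrbMat n A b).rank = n) : IsUnit (Cm A b).det := by
  apply isUnit_det_of_rank_eq
  let e : Fin n ≃ Fin n × Fin 1 := (Equiv.prodUnique (Fin n) (Fin 1)).symm
  have hsub : Cm A b = (ctrbMat n A b).submatrix id e := by
    apply Matrix.ext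
    intro j l
    rfl
  have hid : LinearMap.funLeft ℝ ℝ (id : Fin n → Fin n) = LinearMap.id := by
    ext x
    rfl
  rw [Matrix.rank, hsub, Matrix.mulVecLin_submatrix id e, hid, LinearMap.id_comp,
    LinearMap.range_comp,
    LinearMap.range_eq_top.mpr
      (LinearMap.funLeft_surjective_of_injective ℝ ℝ _ e.symm.injective),
    Submodule.map_top]
  exact hctrb

lemma UU_det : IsUnit (UU A).det := by
  have htri : ((UU A).submatrix id ⇑(Fin.revPerm : Equiv.Perm (Fin n))).BlockTriangular id := by
    intro i j hij
    show (if (i : ℕ) + 1 + ((Fin.rev j : Fin n) : ℕ) ≤ n then _ else 0) = 0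
    rw [if_neg]
    rw [Fin.val_rev]
    have h1 := j.isLt
    have h2 : (j : ℕ) < (i : ℕ) := hij
    omega
  have hdet1 : ((UU A).submatrix id ⇑(Fin.revPerm : Equiv.Perm (Fin n))).det = 1 := by
    rw [Matrix.det_of_upperTriangular htri]
    apply Finset.prod_eq_one
    intro k _
    show (if (k : ℕ) + 1 + ((Fin.rev k : Fin n) : ℕ) ≤ n
        then cp A ((k : ℕ) + 1 + ((Fin.rev k : Fin n) : ℕ)) else 0) = 1
    have hk := k.isLt
    rw [if_pos (by rw [Fin.val_rev]; omega),
      show (k : ℕ) + 1 + ((Fin.rev k : Fin n) : ℕ) = n from by rw [Fin.val_rev]; omega, cp_top]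
  have hperm := Matrix.det_permute' (Fin.revPerm : Equiv.Perm (Fin n)) (UU A)
  rw [hdet1] at hperm
  apply isUnit_iff_ne_zero.mpr
  intro h0
  rw [h0, mul_zero] at hperm
  exact one_ne_zero hperm

lemma TT_det (hctrb : (ctrbMat n A b).rank = n) : IsUnit (TT A b).det := by
  rw [TT_factor, Matrix.det_mul, Matrix.det_transpose]
  exact (UU_det A).mul (Cm_det A b hctrb)

lemma sum_CX_inj (y z : Fin n → ℝ)
    (h : ∑ k : Fin n, C (y k) * X ^ (k : ℕ) = ∑ k : Fin n, C (z k) * X ^ (k : ℕ)) : y = z := by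
  funext k₀
  have h2 := congrArg (fun p => p.coeff (k₀ : ℕ)) h
  simp only [Polynomial.finset_sum_coeff, Polynomial.coeff_C_mul, Polynomial.coeff_X_pow] at h2
  have hs : ∀ w : Fin n → ℝ,
      (∑ k : Fin n, w k * (if (k₀ : ℕ) = (k : ℕ) then (1 : ℝ) else 0)) = w k₀ := by
    intro w
    rw [Finset.sum_eq_single k₀]
    · simp
    · intro k _ hk
      rw [if_neg (fun hh => hk (Fin.ext hh.symm)), mul_zero]
    · intro hk
      exact absurd (Finset.mem_univ k₀) hk
  rwa [hs, hs] at h2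

end main

/-- SISO pole assignment with uniqueness (Proposition 2.29): if `(A, b)` is
controllable, then for every monic real polynomial `Δ̄` of degree `n` there is
exactly one row vector `K` with `charpoly (A + b K) = Δ̄`. -/
theorem siso_pole_assignment_unique
    (n : ℕ) (A : Matrix (Fin n) (Fin n) ℝ) (b : Matrix (Fin n) (Fin 1) ℝ)
    (hctrb : (ctrbMat n A b).rank = n) :
    ∀ Δ : Polynomial ℝ, Δ.Monic → Δ.natDegree = n →
      ∃! K : Matrix (Fin 1) (Fin n) ℝ, (A + b * K).charpoly = Δ := by
  intro Δ hmon hdΔ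
  by_cases hn0 : n = 0
  · subst hn0
    have hΔ : Δ = 1 := by
      have h1 := Polynomial.eq_C_of_natDegree_eq_zero hdΔ
      have h2 : Δ.coeff 0 = 1 := by
        have := hmon.coeff_natDegree
        rwa [hdΔ] at this
      rw [h1, h2, Polynomial.C_1]
    refine ⟨0, ?_, ?_⟩
    · rw [hΔ]
      exact Matrix.det_fin_zero
    · intro y _
      apply Matrix.ext
      intro i j
      exact j.elim0
  have hn : 0 < n := Nat.pos_of_ne_zero hn0
  have hT : IsUnit (TT A b).det := TT_det A b hctrb
  set T := TT A b with hTdef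
  set r : Polynomial ℝ := A.charpoly - Δ with hrdef
  have hrd : r.natDegree < n := by
    by_cases hr0 : r = 0
    · rw [hr0]
      simpa using hn
    · have h1 : A.charpoly.degree = Δ.degree := by
        rw [Polynomial.degree_eq_natDegree (Matrix.charpoly_monic A).ne_zero,
          Polynomial.degree_eq_natDegree hmon.ne_zero, charpoly_natDegree A, hdΔ]
      have h2 := Polynomial.degree_sub_lt h1 (Matrix.charpoly_monic A).ne_zero
        (by rw [(Matrix.charpoly_monic A).leadingCoeff, hmon.leadingCoeff])
      rw [Polynomial.degree_eq_natDegree (Matrix.charpoly_monic A).ne_zero,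
        charpoly_natDegree A] at h2
      exact (Polynomial.natDegree_lt_iff_degree_lt hr0).mpr h2
  set rv : Fin n → ℝ := fun k => r.coeff (k : ℕ) with hrvdef
  have hrrep : r = ∑ k : Fin n, C (rv k) * X ^ (k : ℕ) := by
    have h1 := Polynomial.as_sum_range' r n hrd
    rw [← Fin.sum_univ_eq_sum_range (fun k => (Polynomial.monomial k) (r.coeff k)) n] at h1
    rw [h1]
    apply Finset.sum_congr rfl
    intro k _
    rw [Polynomial.C_mul_X_pow_eq_monomial]
  have key : ∀ K : Matrix (Fin 1) (Fin n) ℝ,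
      (A + b * K).charpoly = Δ ↔ T *ᵥ (fun j => K 0 j) = rv := by
    intro K
    rw [charpoly_update A b K]
    have hsum : ∑ j, C (K 0 j) * ((charmatrix A).adjugate *ᵥ fun i => C (b i 0)) j
        = ∑ k : Fin n, C ((T *ᵥ fun j => K 0 j) k) * X ^ (k : ℕ) := by
      calc ∑ j, C (K 0 j) * ((charmatrix A).adjugate *ᵥ fun i => C (b i 0)) j
          = ∑ j, ∑ k : Fin n, C (K 0 j) * (C (T k j) * X ^ (k : ℕ)) := by
            apply Finset.sum_congr rfl
            intro j _
            rw [adj_mulVec A b hn j, Finset.mul_sum]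
        _ = ∑ k : Fin n, ∑ j, C (K 0 j) * (C (T k j) * X ^ (k : ℕ)) := Finset.sum_comm
        _ = ∑ k : Fin n, C ((T *ᵥ fun j => K 0 j) k) * X ^ (k : ℕ) := by
            apply Finset.sum_congr rfl
            intro k _
            rw [show ((T *ᵥ fun j => K 0 j) k) = ∑ j, T k j * K 0 j from rfl, map_sum,
              Finset.sum_mul]
            apply Finset.sum_congr rfl
            intro j _
            rw [_root_.map_mul]
            ring
    rw [hsum]
    constructor
    · intro h
      apply sum_CX_inj
      rw [← hrrep, hrdef, ← h]
      ring
    · intro h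
      rw [h, ← hrrep, hrdef]
      ring
  refine ⟨Matrix.of fun _ j => (T⁻¹ *ᵥ rv) j, ?_, ?_⟩
  · apply (key _).mpr
    show T *ᵥ (T⁻¹ *ᵥ rv) = rv
    rw [Matrix.mulVec_mulVec, Matrix.mul_nonsing_inv _ hT, Matrix.one_mulVec]
  · intro K' hK'
    rw [key] at hK'
    have hx : (fun j => K' 0 j) = T⁻¹ *ᵥ rv := by
      rw [← hK', Matrix.mulVec_mulVec, Matrix.nonsing_inv_mul _ hT, Matrix.one_mulVec]
    apply Matrix.ext
    intro i j
    have hi : i = 0 := Subsingleton.elim i 0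
    subst hi
    exact congrFun hx j
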